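/- (The *-operation preserves pairs of weak ribbons.) Let α, β, μ, ν be partitions with n parts such that α ⊆ μ, β ⊆ ν, and both μ/α and ν/β are weak ribbons, i.e., μ_{k+1} ≤ α_k + 1 and ν_{k+1} ≤ β_k + 1 for all 1 ≤ k < n. Then λ(μ,ν)_{k+1} ≤ λ(α,β)_k + 1 and ρ(μ,ν)_{k+1} ≤ ρ(α,β)_k + 1 for all 1 ≤ k < n; that is, the skew shapes λ(μ,ν)/λ(α,β) and ρ(μ,ν)/ρ(α,β) are again weak ribbons. -/

import Mathlib

/-- A partition with `n` (possibly zero) parts: a weakly decreasing sequence of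
nonnegative integers, recorded 0-indexed, vanishing from index `n` on. -/
def IsPartitionN (n : ℕ) (μ : ℕ → ℕ) : Prop :=
  Antitone μ ∧ ∀ i, n ≤ i → μ i = 0

/-- A partition (finitely many nonzero parts), 0-indexed. -/
def IsPartition (μ : ℕ → ℕ) : Prop :=
  Antitone μ ∧ ∃ N, ∀ i, N ≤ i → μ i = 0

/-- `λ(μ,ν)_k = μ_k − k + #{j : 1 ≤ j ≤ n, ν_j − j ≥ μ_k − k}`, 0-indexed,
so the (k+1)-st part of `λ(μ,ν)`, as an integer. -/
def lamStar (n : ℕ) (μ ν : ℕ → ℕ) (k : ℕ) : ℤ :=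
  (μ k : ℤ) - (k + 1) +
    ((Finset.range n).filter (fun j => (μ k : ℤ) - (k + 1) ≤ (ν j : ℤ) - (j + 1))).card

/-- `ρ(μ,ν)_j = ν_j − j + 1 + #{k : 1 ≤ k ≤ n, μ_k − k > ν_j − j}`, 0-indexed. -/
def rhoStar (n : ℕ) (μ ν : ℕ → ℕ) (j : ℕ) : ℤ :=
  (ν j : ℤ) - (j + 1) + 1 +
    ((Finset.range n).filter (fun k => (ν j : ℤ) - (j + 1) < (μ k : ℤ) - (k + 1))).card

/-- `λ(μ,ν)` as a sequence of natural numbers. -/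
def lamStarN (n : ℕ) (μ ν : ℕ → ℕ) (k : ℕ) : ℕ := (lamStar n μ ν k).toNat

/-- `ρ(μ,ν)` as a sequence of natural numbers. -/
def rhoStarN (n : ℕ) (μ ν : ℕ → ℕ) (k : ℕ) : ℕ := (rhoStar n μ ν k).toNat

/-- The conjugate partition: `μ′_i = #{k : μ_k ≥ i}` (1-indexed), recorded 0-indexed. -/
noncomputable def conjP (μ : ℕ → ℕ) (i : ℕ) : ℕ := {k : ℕ | i + 1 ≤ μ k}.ncard

/-- Remove a full column of height `k`: subtract 1 from the first `k` parts. -/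
def removeCol (k : ℕ) (σ : ℕ → ℕ) : ℕ → ℕ := fun j => if j < k then σ j - 1 else σ j

/-- An LR filling of the skew shape `θ/ν` of type `μ` (all 0-indexed; cell `(i,j)`
is row `i+1`, column `j+1`; the entry `0` marks cells outside the skew shape).
Rows weakly increase, columns strictly increase, the entry `m+1` occurs `μ m`
times, and the reverse reading word (rows top to bottom, each row right to left)
is a lattice permutation. It is required that `ν ⊆ θ`. -/
def IsLRFilling (θ ν μ : ℕ → ℕ) (T : ℕ → ℕ → ℕ) : Prop :=
  (∀ i, ν i ≤ θ i) ∧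
  (∀ i j, ν i ≤ j → j < θ i → 1 ≤ T i j) ∧
  (∀ i j, ¬(ν i ≤ j ∧ j < θ i) → T i j = 0) ∧
  (∀ i j j', ν i ≤ j → j ≤ j' → j' < θ i → T i j ≤ T i j') ∧
  (∀ i i' j, i < i' → ν i ≤ j → j < θ i → ν i' ≤ j → j < θ i' → T i j < T i' j) ∧
  (∀ m : ℕ, {p : ℕ × ℕ | T p.1 p.2 = m + 1}.ncard = μ m) ∧
  (∀ m i j : ℕ,
    {p : ℕ × ℕ | T p.1 p.2 = m + 2 ∧ (p.1 < i ∨ (p.1 = i ∧ j ≤ p.2))}.ncard ≤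
    {p : ℕ × ℕ | T p.1 p.2 = m + 1 ∧ (p.1 < i ∨ (p.1 = i ∧ j ≤ p.2))}.ncard)

/-- The Littlewood–Richardson coefficient `c_{μν}^θ`: the number of LR fillings
of `θ/ν` of type `μ` (equal to `0` when `ν ⊄ θ`). -/
noncomputable def lrCoeff (μ ν θ : ℕ → ℕ) : ℕ := Nat.card {T : ℕ → ℕ → ℕ // IsLRFilling θ ν μ T}

/-- Auxiliary count: number of `j < n` with `x ≤ c j`. -/
def cntStar (n : ℕ) (c : ℕ → ℤ) (x : ℤ) : ℕ :=
  ((Finset.range n).filter (fun j => x ≤ c j)).card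

lemma cntStar_mono (n : ℕ) (c : ℕ → ℤ) (hc : StrictAnti c) {x x' : ℤ} (h : x ≤ x') :
    x + (cntStar n c x : ℤ) ≤ x' + (cntStar n c x' : ℤ) := by
  have key : cntStar n c x ≤ cntStar n c x' + (x' - x).toNat := by
    classical
    unfold cntStar
    set A := (Finset.range n).filter (fun j => x ≤ c j) with hA
    have hsplit : (A.filter (fun j => x' ≤ c j)).card
        + (A.filter (fun j => ¬ x' ≤ c j)).card = A.card :=
      Finset.card_filter_add_card_filter_not _
    have h1 : A.filter (fun j => x' ≤ c j) = (Finset.range n).filter (fun j => x' ≤ c j) := by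
      rw [hA, Finset.filter_filter]
      exact Finset.filter_congr (fun j _ => by constructor <;> intro hj <;> omega)
    have h2 : (A.filter (fun j => ¬ x' ≤ c j)).card ≤ (Finset.Ico x x').card := by
      apply Finset.card_le_card_of_injOn c
      · intro j hj
        simp only [hA, Finset.mem_coe, Finset.mem_filter, Finset.mem_range] at hj
        simp only [Finset.mem_coe, Finset.mem_Ico]
        omega
      · exact Set.InjOn.mono (fun a _ => trivial) (hc.injective.injOn)
    rw [Int.card_Ico] at h2
    rw [h1] at hsplit
    omega
  have : ((x' - x).toNat : ℤ) = x' - x := Int.toNat_of_nonneg (by omega)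
  have := Int.ofNat_le.mpr key
  push_cast at this
  omega

lemma cntStar_shift (n : ℕ) (c c' : ℕ → ℤ) (hcc : ∀ j, j + 1 < n → c' (j + 1) ≤ c j)
    (x : ℤ) : cntStar n c' x ≤ cntStar n c x + 1 := by
  classical
  unfold cntStar
  set A := (Finset.range n).filter (fun j => x ≤ c' j) with hA
  set B := (Finset.range n).filter (fun j => x ≤ c j) with hB
  have h1 : (A.erase 0).card ≤ B.card := by
    apply Finset.card_le_card_of_injOn (fun j => j - 1)
    · intro j hj
      simp only [hA, Finset.mem_coe, Finset.mem_erase, Finset.mem_filter, Finset.mem_range] at hj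
      obtain ⟨hj0, hjn, hjx⟩ := hj
      have hj1 : j - 1 + 1 = j := by omega
      have := hcc (j - 1) (by omega)
      rw [hj1] at this
      simp only [hB, Finset.mem_coe, Finset.mem_filter, Finset.mem_range]
      exact ⟨by omega, le_trans hjx this⟩
    · intro a ha b hb hab
      simp only [hA, Finset.mem_coe, Finset.mem_erase] at ha hb
      have hab' : a - 1 = b - 1 := hab
      omega
  have h2 : A ⊆ insert 0 (A.erase 0) := by
    intro j hj
    by_cases hj0 : j = 0
    · simp [hj0]
    · exact Finset.mem_insert_of_mem (Finset.mem_erase.mpr ⟨hj0, hj⟩)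
  have h3 := Finset.card_le_card h2
  have h4 := Finset.card_insert_le 0 (A.erase 0)
  omega

lemma strictAnti_content (ν : ℕ → ℕ) (hν : Antitone ν) :
    StrictAnti (fun j : ℕ => (ν j : ℤ) - (j + 1)) := by
  intro j j' h
  have h1 : (ν j' : ℤ) ≤ ν j := by exact_mod_cast hν h.le
  have h2 : (j : ℤ) < j' := by exact_mod_cast h
  simp only
  omega

/-- The `*`-operation preserves pairs of weak ribbons: if `μ/α` and `ν/β` are
weak ribbons, then so are `λ(μ,ν)/λ(α,β)` and `ρ(μ,ν)/ρ(α,β)`. -/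
theorem star_preserves_weak_ribbons (n : ℕ) (α β μ ν : ℕ → ℕ)
    (hα : IsPartitionN n α) (hβ : IsPartitionN n β)
    (hμ : IsPartitionN n μ) (hν : IsPartitionN n ν)
    (hαμ : ∀ k, α k ≤ μ k) (hβν : ∀ k, β k ≤ ν k)
    (hrib1 : ∀ k, k + 1 < n → μ (k + 1) ≤ α k + 1)
    (hrib2 : ∀ k, k + 1 < n → ν (k + 1) ≤ β k + 1) :
    (∀ k, k + 1 < n → lamStar n μ ν (k + 1) ≤ lamStar n α β k + 1) ∧
    (∀ k, k + 1 < n → rhoStar n μ ν (k + 1) ≤ rhoStar n α β k + 1) := by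
  classical
  set cν : ℕ → ℤ := fun j => (ν j : ℤ) - (j + 1) with hcν
  set cβ : ℕ → ℤ := fun j => (β j : ℤ) - (j + 1) with hcβ
  set cμ : ℕ → ℤ := fun j => (μ j : ℤ) - (j + 1) with hcμ
  set cα : ℕ → ℤ := fun j => (α j : ℤ) - (j + 1) with hcα
  have hνanti : StrictAnti cν := strictAnti_content ν hν.1
  have hμanti : StrictAnti cμ := strictAnti_content μ hμ.1
  have hribν : ∀ j, j + 1 < n → cν (j + 1) ≤ cβ j := by
    intro j hj
    have := hrib2 j hj
    have : (ν (j + 1) : ℤ) ≤ (β j : ℤ) + 1 := by exact_mod_cast this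
    simp only [hcν, hcβ]
    push_cast
    omega
  have hribμ : ∀ j, j + 1 < n → cμ (j + 1) ≤ cα j := by
    intro j hj
    have := hrib1 j hj
    have : (μ (j + 1) : ℤ) ≤ (α j : ℤ) + 1 := by exact_mod_cast this
    simp only [hcμ, hcα]
    push_cast
    omega
  constructor
  · intro k hk
    have e1 : lamStar n μ ν (k + 1) = cμ (k + 1) + (cntStar n cν (cμ (k + 1)) : ℤ) := rfl
    have e2 : lamStar n α β k = cα k + (cntStar n cβ (cα k) : ℤ) := rfl
    rw [e1, e2]
    have hx : cμ (k + 1) ≤ cα k := hribμ k hk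
    calc cμ (k + 1) + (cntStar n cν (cμ (k + 1)) : ℤ)
        ≤ cα k + (cntStar n cν (cα k) : ℤ) := cntStar_mono n cν hνanti hx
      _ ≤ cα k + ((cntStar n cβ (cα k) : ℤ) + 1) := by
          have h := cntStar_shift n cβ cν hribν (cα k)
          omega
      _ = cα k + (cntStar n cβ (cα k) : ℤ) + 1 := by ring
  · intro k hk
    have e1 : rhoStar n μ ν (k + 1) = (cν (k + 1) + 1) + (cntStar n cμ (cν (k + 1) + 1) : ℤ) := by
      unfold rhoStar cntStar
      congr 2
    have e2 : rhoStar n α β k = (cβ k + 1) + (cntStar n cα (cβ k + 1) : ℤ) := by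
      unfold rhoStar cntStar
      congr 2
    rw [e1, e2]
    have hx : cν (k + 1) + 1 ≤ cβ k + 1 := by have := hribν k hk; omega
    calc (cν (k + 1) + 1) + (cntStar n cμ (cν (k + 1) + 1) : ℤ)
        ≤ (cβ k + 1) + (cntStar n cμ (cβ k + 1) : ℤ) := cntStar_mono n cμ hμanti hx
      _ ≤ (cβ k + 1) + ((cntStar n cα (cβ k + 1) : ℤ) + 1) := by
          have h := cntStar_shift n cα cμ hribμ (cβ k + 1)
          omega
      _ = (cβ k + 1) + (cntStar n cα (cβ k + 1) : ℤ) + 1 := by ring
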